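/- Let n ≥ 1, let S be a nonempty set of positive integers, and let x > 1 be real. Then Φ_{D,S,n}(x) = ∏_{d ∣ n} (x^d − 1)^{μ_{D,S}(n/d)}, where the exponent μ_{D,S}(n/d) is an integer (the power is an integer power of the positive real x^d − 1). -/

import Mathlib

open Complex Polynomial Finset

/-- The generalized cyclotomic polynomial `Φ_{D,S,n}(X) = ∏_{1 ≤ j ≤ n, gcd(j,n) ∈ S} (X − ζ_n^j)`. -/
noncomputable def genCyc (S : Set ℕ) [DecidablePred (· ∈ S)] (n : ℕ) : Polynomial ℂ :=
  ∏ j ∈ (Finset.Icc 1 n).filter (fun j => Nat.gcd j n ∈ S),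
    (X - C (Complex.exp (2 * Real.pi * Complex.I / n) ^ j))

/-- The Möbius-type function `μ_{D,S}(m) = ∑_{e ∣ m} μ(e) ρ_S(m/e)`. -/
def muDS (S : Set ℕ) [DecidablePred (· ∈ S)] (m : ℕ) : ℤ :=
  ∑ e ∈ m.divisors, ArithmeticFunction.moebius e * (if m / e ∈ S then 1 else 0)

lemma zpow_sum_aux {α : Type*} (s : Finset α) {a : ℂ} (ha : a ≠ 0) (f : α → ℤ) :
    a ^ (∑ i ∈ s, f i) = ∏ i ∈ s, a ^ f i := by
  classical
  induction s using Finset.cons_induction with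
  | empty => simp
  | cons i s hi ih => rw [Finset.sum_cons, Finset.prod_cons, zpow_add₀ ha, ih]

theorem sum_muDS' (S : Set ℕ) [DecidablePred (· ∈ S)] (hSpos : ∀ m ∈ S, 1 ≤ m)
    (m : ℕ) (hm : m ≠ 0) :
    ∑ d ∈ m.divisors, muDS S d = if m ∈ S then 1 else 0 := by
  have h0 : (0 : ℕ) ∉ S := fun h => by simpa using hSpos 0 h
  set ρ : ArithmeticFunction ℤ :=
    ⟨fun k => if k ∈ S then 1 else 0, by simp [h0]⟩ with hρ
  have hmu : ∀ k, muDS S k = (ArithmeticFunction.moebius * ρ) k := by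
    intro k
    rw [ArithmeticFunction.mul_apply, Nat.sum_divisorsAntidiagonal
      (f := fun a b => (ArithmeticFunction.moebius a : ℤ) * ρ b)]
    rfl
  have : ∑ d ∈ m.divisors, muDS S d
      = ((ArithmeticFunction.zeta : ArithmeticFunction ℕ) *
          (ArithmeticFunction.moebius * ρ) : ArithmeticFunction ℤ) m := by
    rw [ArithmeticFunction.coe_zeta_mul_apply]
    exact Finset.sum_congr rfl fun d _ => hmu d
  rw [this, ← mul_assoc, ArithmeticFunction.coe_zeta_mul_moebius, one_mul]
  rfl

theorem stmt1 (S : Set ℕ) [DecidablePred (· ∈ S)] (hS : S.Nonempty)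
    (hSpos : ∀ m ∈ S, 1 ≤ m) (n : ℕ) (hn : 1 ≤ n) (x : ℝ) (hx : 1 < x) :
    (genCyc S n).eval (x : ℂ) = ∏ d ∈ n.divisors, ((x : ℂ) ^ d - 1) ^ (muDS S (n / d)) := by
  classical
  have hn0 : n ≠ 0 := by omega
  set ζ : ℂ := Complex.exp (2 * Real.pi * Complex.I / n) with hζdef
  have hζ : IsPrimitiveRoot ζ n := Complex.isPrimitiveRoot_exp n hn0
  set P : ℕ → ℂ := fun j => (x : ℂ) - ζ ^ j with hP
  have hPne : ∀ j, P j ≠ 0 := by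
    intro j h
    have h1 : (x : ℂ) = ζ ^ j := by rwa [sub_eq_zero] at h
    have h2 : ‖((x : ℂ))‖ = ‖(ζ ^ j)‖ := by rw [h1]
    have h3 : ‖(ζ ^ j)‖ = 1 := by
      have hpow : (‖(ζ ^ j)‖) ^ n = 1 := by
        rw [← norm_pow, ← pow_mul, mul_comm j n, pow_mul, hζ.pow_eq_one, one_pow, norm_one]
      have hnn : 0 ≤ ‖(ζ ^ j)‖ := norm_nonneg _
      rcases lt_trichotomy (‖(ζ ^ j)‖) 1 with hlt | heq | hgt
      · exact absurd hpow (by have := pow_lt_one₀ hnn hlt hn0; linarith)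
      · exact heq
      · exact absurd hpow (by have := one_lt_pow₀ hgt hn0; linarith)
    rw [Complex.norm_real, Real.norm_eq_abs, abs_of_pos (by linarith), h3] at h2
    linarith
  -- key : product over j with (n/d) ∣ gcd j n equals x^d - 1
  have key : ∀ d ∈ n.divisors,
      ∏ j ∈ (Finset.Icc 1 n).filter (fun j => (n / d) ∣ Nat.gcd j n), P j
        = (x : ℂ) ^ d - 1 := by
    intro d hd
    obtain ⟨hdvd, -⟩ := Nat.mem_divisors.mp hd
    set m := n / d with hm
    have hmd : m * d = n := Nat.div_mul_cancel hdvd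
    have hd0 : d ≠ 0 := by rintro rfl; simp at hmd; omega
    have hm0 : m ≠ 0 := by intro h; rw [h] at hmd; omega
    set η : ℂ := ζ ^ m with hηdef
    have hηp : IsPrimitiveRoot η d := hζ.pow (Nat.pos_of_ne_zero hn0) hmd.symm
    have hmdvd : m ∣ n := ⟨d, hmd.symm⟩
    have himg : (Finset.range d).image (fun k => η ^ k) = Polynomial.nthRootsFinset d (1 : ℂ) := by
      apply Finset.eq_of_subset_of_card_le
      · intro z hz
        simp only [Finset.mem_image] at hz
        obtain ⟨k, -, rfl⟩ := hz
        exact (Polynomial.mem_nthRootsFinset (Nat.pos_of_ne_zero hd0) 1).2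
          (by rw [← pow_mul, mul_comm k d, pow_mul, hηp.pow_eq_one, one_pow])
      · rw [hηp.card_nthRootsFinset, Finset.card_image_of_injOn hηp.injOn_pow,
          Finset.card_range]
    have h1 : (x : ℂ) ^ d - 1 = ∏ k ∈ Finset.range d, ((x : ℂ) - η ^ k) := by
      have hXd := congrArg (Polynomial.eval (x : ℂ))
        (X_pow_sub_one_eq_prod (Nat.pos_of_ne_zero hd0) hηp)
      simp only [eval_sub, eval_pow, eval_X, eval_one, eval_prod, eval_C] at hXd
      rw [hXd, ← himg, Finset.prod_image]
      intro a ha b hb hab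
      exact hηp.injOn_pow (by simpa using ha) (by simpa using hb) hab
    have h2 : ∏ k ∈ Finset.range d, ((x : ℂ) - η ^ k)
        = ∏ k ∈ Finset.Icc 1 d, ((x : ℂ) - η ^ k) := by
      obtain ⟨b, rfl⟩ := Nat.exists_eq_succ_of_ne_zero hd0
      calc ∏ k ∈ Finset.range (b + 1), ((x : ℂ) - η ^ k)
          = (∏ k ∈ Finset.range b, ((x : ℂ) - η ^ (k + 1))) * ((x : ℂ) - η ^ 0) :=
            Finset.prod_range_succ' _ _
        _ = (∏ k ∈ Finset.range b, ((x : ℂ) - η ^ (k + 1))) * ((x : ℂ) - η ^ (b + 1)) := by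
            rw [pow_zero, hηp.pow_eq_one]
        _ = ∏ k ∈ Finset.range (b + 1), ((x : ℂ) - η ^ (k + 1)) :=
            (Finset.prod_range_succ _ _).symm
        _ = ∏ k ∈ Finset.Ico 1 (b + 2), ((x : ℂ) - η ^ k) := by
            rw [Finset.prod_Ico_eq_prod_range]
            exact Finset.prod_congr rfl fun k _ => by rw [add_comm 1 k]
        _ = ∏ k ∈ Finset.Icc 1 (b + 1), ((x : ℂ) - η ^ k) := by rw [← Finset.Ico_add_one_right_eq_Icc]; rfl
    have h3 : ∏ j ∈ (Finset.Icc 1 n).filter (fun j => m ∣ Nat.gcd j n), P j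
        = ∏ k ∈ Finset.Icc 1 d, ((x : ℂ) - η ^ k) := by
      apply Finset.prod_nbij' (i := fun j => j / m) (j := fun k => m * k)
      · intro a ha
        simp only [Finset.mem_filter, Finset.mem_Icc] at ha
        obtain ⟨⟨ha1, ha2⟩, hadvd⟩ := ha
        have hma : m ∣ a := hadvd.trans (Nat.gcd_dvd_left _ _)
        simp only [Finset.mem_Icc]
        constructor
        · exact (Nat.one_le_div_iff (Nat.pos_of_ne_zero hm0)).2 (Nat.le_of_dvd (by omega) hma)
        · calc a / m ≤ n / m := Nat.div_le_div_right ha2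
            _ = d := by rw [← hmd, Nat.mul_div_cancel_left _ (Nat.pos_of_ne_zero hm0)]
      · intro k hk
        simp only [Finset.mem_Icc] at hk
        simp only [Finset.mem_filter, Finset.mem_Icc]
        refine ⟨⟨?_, ?_⟩, ?_⟩
        · have : 1 ≤ m := Nat.one_le_iff_ne_zero.2 hm0
          calc 1 ≤ m * 1 := by omega
            _ ≤ m * k := Nat.mul_le_mul_left m hk.1
        · calc m * k ≤ m * d := Nat.mul_le_mul_left m hk.2
            _ = n := hmd
        · exact Nat.dvd_gcd ⟨k, rfl⟩ hmdvd
      · intro a ha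
        simp only [Finset.mem_filter] at ha
        exact Nat.mul_div_cancel' (ha.2.trans (Nat.gcd_dvd_left _ _))
      · intro k _
        exact Nat.mul_div_cancel_left _ (Nat.pos_of_ne_zero hm0)
      · intro a ha
        simp only [Finset.mem_filter] at ha
        have hma : m ∣ a := ha.2.trans (Nat.gcd_dvd_left _ _)
        simp only [hP, hηdef, ← pow_mul]
        rw [Nat.mul_div_cancel' hma]
    rw [h3, ← h2, ← h1]
  -- main computation
  have hstep1 : ∀ d ∈ n.divisors,
      ((x : ℂ) ^ d - 1) ^ (muDS S (n / d))
        = ∏ j ∈ Finset.Icc 1 n,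
            (if (n / d) ∣ Nat.gcd j n then (P j) ^ (muDS S (n / d)) else 1) := by
    intro d hd
    rw [← key d hd, ← Finset.prod_zpow, Finset.prod_filter]
  rw [Finset.prod_congr rfl hstep1, Finset.prod_comm]
  have hstep2 : ∀ j ∈ Finset.Icc 1 n,
      ∏ d ∈ n.divisors, (if (n / d) ∣ Nat.gcd j n then (P j) ^ (muDS S (n / d)) else 1)
        = if Nat.gcd j n ∈ S then P j else 1 := by
    intro j hj
    simp only [Finset.mem_Icc] at hj
    have hg0 : Nat.gcd j n ≠ 0 := fun h => hn0 (Nat.eq_zero_of_gcd_eq_zero_right h)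
    have hgd : Nat.gcd j n ∣ n := Nat.gcd_dvd_right _ _
    rw [← Finset.prod_filter, ← zpow_sum_aux _ (hPne j)]
    have hsum : ∑ d ∈ (n.divisors).filter (fun d => (n / d) ∣ Nat.gcd j n), muDS S (n / d)
        = if Nat.gcd j n ∈ S then 1 else 0 := by
      rw [Finset.sum_filter]
      have hdiv : ∑ d ∈ n.divisors, (if (n / d) ∣ Nat.gcd j n then muDS S (n / d) else 0)
          = ∑ d ∈ n.divisors, (if d ∣ Nat.gcd j n then muDS S d else 0) :=
        Nat.sum_div_divisors n (fun d => if d ∣ Nat.gcd j n then muDS S d else 0)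
      have hset : (n.divisors).filter (fun d => d ∣ Nat.gcd j n) = (Nat.gcd j n).divisors := by
        ext a
        simp only [Finset.mem_filter, Nat.mem_divisors]
        exact ⟨fun h => ⟨h.2, hg0⟩, fun h => ⟨⟨h.1.trans hgd, hn0⟩, h.1⟩⟩
      rw [hdiv, ← Finset.sum_filter, hset, sum_muDS' S hSpos _ hg0]
    rw [hsum]
    split_ifs with h
    · exact zpow_one _
    · exact zpow_zero _
  rw [Finset.prod_congr rfl hstep2, ← Finset.prod_filter]
  rw [genCyc, eval_prod]
  exact Finset.prod_congr rfl fun j _ => by simp [hP, hζdef]
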